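/- Let (W,S) be a Coxeter system, (J,K) an S-admissible pair such that the longest element ρ_J is central in ⟨J⟩, and let S' = T_{(J,K)}(S) be the corresponding twist. Then the Coxeter matrices M(S) and M(S') are isomorphic (via the bijection S → S' fixing J ∪ J^⊥ ∪ K and sending l ↦ ρ_J l ρ_J for l ∈ L). -/

import Mathlib

open Real Complex

namespace CTwist

variable {B : Type*} (M : CoxeterMatrix B)

noncomputable def kk (a b : B) : ℝ := -Real.cos (Real.pi / (M a b))

noncomputable def ee (a : B) : (B →₀ ℝ) := Finsupp.single a 1

noncomputable def cf (a : B) : (B →₀ ℝ) →ₗ[ℝ] ℝ :=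
  Finsupp.linearCombination ℝ (fun b => kk M b a)

noncomputable def sig (a : B) : Module.End ℝ (B →₀ ℝ) :=
  LinearMap.id - (2:ℝ) • LinearMap.smulRight (cf M a) (ee a)

lemma kk_symm (a b : B) : kk M a b = kk M b a := by rw [kk, kk, M.symmetric]

lemma kk_diag (a : B) : kk M a a = 1 := by
  rw [kk, M.diagonal]; norm_num

lemma cf_single (a b : B) : cf M a (ee b) = kk M b a := by
  simp [cf, ee, Finsupp.linearCombination_single]

lemma sig_apply (a : B) (v : B →₀ ℝ) :
    sig M a v = v - (2 * cf M a v) • ee a := by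
  simp [sig, smul_smul]

lemma apply_combo (a b : B) (v : B →₀ ℝ) (x y : ℝ) :
    (sig M a * sig M b) (v + x • ee a + y • ee b)
    = v + (-x - 2*(kk M a b)*(-y - 2*(kk M a b)*x - 2*(cf M b v)) - 2*(cf M a v)) • ee a
        + (-y - 2*(kk M a b)*x - 2*(cf M b v)) • ee b := by
  set κ := kk M a b with hκ
  have hba : kk M b a = κ := (kk_symm M a b).symm
  rw [Module.End.mul_apply]
  have h1 : cf M b (v + x • ee a + y • ee b) = cf M b v + x * κ + y := by
    simp [map_add, map_smul, cf_single, kk_diag, hκ, smul_eq_mul]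
  have hin : sig M b (v + x • ee a + y • ee b)
      = v + x • ee a + (-y - 2*κ*x - 2*(cf M b v)) • ee b := by
    rw [sig_apply, h1]; module
  rw [hin, sig_apply]
  have h2 : cf M a (v + x • ee a + (-y - 2*κ*x - 2*(cf M b v)) • ee b)
      = cf M a v + x + (-y - 2*κ*x - 2*(cf M b v)) * κ := by
    simp [map_add, map_smul, cf_single, kk_diag, hba, smul_eq_mul]
    try ring
  rw [h2]
  module

lemma key_identity (C S x y c1 c2 : ℝ) (hP : S^2 + C^2 = 1) :
    ((-x - 2*(-C)*(-y - 2*(-C)*x - 2*c2) - 2*c1 : ℝ) : ℂ)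
      + ((-C:ℝ) + (S:ℝ)*Complex.I) * ((-y - 2*(-C)*x - 2*c2 : ℝ) : ℂ)
    = ((2*C^2-1:ℝ) + (2*S*C:ℝ)*Complex.I) * ((x:ℂ) + ((-C:ℝ)+(S:ℝ)*Complex.I)*(y:ℂ))
      + ((-2*c1 - 2*C*c2 : ℝ) + (-2*S*c2:ℝ)*Complex.I) := by
  rw [Complex.ext_iff]
  constructor
  · push_cast
    simp [Complex.mul_re, Complex.mul_im, ← Complex.ofReal_pow]
    ring_nf
    linear_combination (2*C*y) * hP
  · push_cast
    simp [Complex.mul_re, Complex.mul_im, ← Complex.ofReal_pow]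
    ring_nf

lemma pow_eq_one_aux (a b : B) (h0 : M a b ≠ 0) (h1 : M a b ≠ 1) :
    (sig M a * sig M b) ^ (M a b) = 1 := by
  set m : ℕ := M a b with hm
  have hm2 : 2 ≤ m := by omega
  set θ : ℝ := Real.pi / m with hθ
  set C : ℝ := Real.cos θ with hC
  set S : ℝ := Real.sin θ with hS
  have hmR : (0:ℝ) < (m:ℝ) := by positivity
  have hθpos : 0 < θ := by positivity
  have hθlt : θ < Real.pi := by
    rw [hθ]
    apply div_lt_self Real.pi_pos
    exact_mod_cast by omega
  have hθle : θ ≤ Real.pi / 2 := by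
    rw [hθ]
    apply div_le_div_of_nonneg_left Real.pi_pos.le (by norm_num)
    exact_mod_cast hm2
  have hSpos : 0 < S := Real.sin_pos_of_pos_of_lt_pi hθpos hθlt
  have hκ : kk M a b = -C := rfl
  have hPyth : S^2 + C^2 = 1 := Real.sin_sq_add_cos_sq θ
  set lam : ℂ := (-C : ℝ) + (S:ℝ) * Complex.I with hlam
  set mu : ℂ := (Real.cos (2*θ) : ℝ) + (Real.sin (2*θ) : ℝ) * Complex.I with hmu
  have hmu_exp : mu = Complex.exp ((2*θ : ℝ) * Complex.I) := by
    rw [hmu, Complex.exp_mul_I]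
    rw [Complex.ofReal_cos, Complex.ofReal_sin]
  have hr : ((m:ℝ)) * (2*θ) = 2 * Real.pi := by
    rw [hθ]; field_simp
    try ring
  have hmupow : mu ^ m = 1 := by
    rw [hmu_exp, ← Complex.exp_nat_mul]
    have hc : ((m:ℕ):ℂ) * (((2*θ:ℝ)) * Complex.I) = 2 * (Real.pi:ℂ) * Complex.I := by
      have := congrArg (fun x : ℝ => (x : ℂ)) hr
      push_cast at this ⊢
      linear_combination Complex.I * this
    rw [hc, Complex.exp_two_pi_mul_I]
  have hmune : mu ≠ 1 := by
    intro h
    have hre : Real.cos (2*θ) = 1 := by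
      have h2 := congrArg Complex.re h
      rw [hmu] at h2
      simpa only [Complex.add_re, Complex.ofReal_re, Complex.mul_re, Complex.ofReal_im,
        Complex.I_re, Complex.I_im, Complex.one_re, mul_zero, mul_one, zero_mul,
        sub_zero, add_zero, zero_sub, neg_zero] using h2
    have h2θ : 2*θ = 0 := by
      rw [Real.cos_eq_one_iff_of_lt_of_lt (by nlinarith [Real.pi_pos]) (by nlinarith)] at hre
      exact hre
    nlinarith
  apply LinearMap.ext
  intro v
  have key : ∀ n : ℕ, ∃ x y : ℝ,
      ((sig M a * sig M b) ^ n) v = v + x • ee a + y • ee b ∧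
      ((x:ℂ) + lam * y) * (mu - 1)
        = ((-2*(cf M a v) - 2*C*(cf M b v) : ℝ) + (-2*S*(cf M b v):ℝ) * Complex.I) * (mu ^ n - 1) := by
    intro n
    induction n with
    | zero =>
        exact ⟨0, 0, by simp [ee], by simp⟩
    | succ n ih =>
        obtain ⟨x, y, hxy, hz⟩ := ih
        refine ⟨-x - 2*(kk M a b)*(-y - 2*(kk M a b)*x - 2*(cf M b v)) - 2*(cf M a v),
                -y - 2*(kk M a b)*x - 2*(cf M b v), ?_, ?_⟩
        · rw [pow_succ', Module.End.mul_apply, hxy, apply_combo]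
        · set c₁ := cf M a v with hc₁
          set c₂ := cf M b v with hc₂
          set del : ℂ := ((-2*c₁ - 2*C*c₂ : ℝ) + (-2*S*c₂:ℝ) * Complex.I) with hdel
          have hkey : ((-x - 2*(kk M a b)*(-y - 2*(kk M a b)*x - 2*c₂) - 2*c₁ : ℝ) : ℂ)
              + lam * ((-y - 2*(kk M a b)*x - 2*c₂ : ℝ) : ℂ)
              = mu * ((x:ℂ) + lam * y) + del := by
            have hki := key_identity C S x y c₁ c₂ hPyth
            rw [hκ, hlam, hmu, hdel, Real.cos_two_mul θ, Real.sin_two_mul θ, ← hC, ← hS]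
            push_cast at hki ⊢
            linear_combination hki
          calc ((((-x - 2*(kk M a b)*(-y - 2*(kk M a b)*x - 2*c₂) - 2*c₁ : ℝ)) : ℂ)
                + lam * ((-y - 2*(kk M a b)*x - 2*c₂ : ℝ):ℂ)) * (mu - 1)
              = (mu * ((x:ℂ) + lam * y) + del) * (mu - 1) := by rw [hkey]
            _ = del * (mu ^ (n+1) - 1) := by linear_combination mu * hz
  obtain ⟨x, y, hxy, hz⟩ := key m
  rw [hmupow] at hz
  simp only [sub_self, mul_zero] at hz
  have hxy0 : (x:ℂ) + lam * y = 0 := by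
    rcases mul_eq_zero.mp hz with h | h
    · exact h
    · exact absurd (sub_eq_zero.mp h) hmune
  have hy : y = 0 := by
    have him := congrArg Complex.im hxy0
    rw [hlam] at him
    simp at him
    rcases him with h | h
    · exact absurd h (ne_of_gt hSpos)
    · exact h
  have hx : x = 0 := by
    have hre := congrArg Complex.re hxy0
    rw [hlam, hy] at hre
    simpa using hre
  rw [hxy, hx, hy]
  simp [ee]

lemma sig_liftable : M.IsLiftable (sig M) := by
  intro a b
  rcases eq_or_ne a b with rfl | hab
  · rw [M.diagonal a, pow_one]
    apply LinearMap.ext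
    intro v
    rw [Module.End.mul_apply, sig_apply]
    have h1 : cf M a (v - (2 * cf M a v) • ee a) = - cf M a v := by
      simp [map_sub, map_smul, cf_single, kk_diag, smul_eq_mul]
      ring
    rw [sig_apply, h1]
    simp
  · rcases eq_or_ne (M a b) 0 with h0 | h0
    · rw [h0, pow_zero]
    · exact pow_eq_one_aux M a b h0 (M.off_diagonal a b hab)

theorem simple_injective {W : Type*} [Group W] (cs : CoxeterSystem M W) :
    Function.Injective cs.simple := by
  intro i j hij
  by_contra hne
  have h := congrArg (cs.lift ⟨sig M, sig_liftable M⟩) hij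
  rw [CoxeterSystem.lift_apply_simple, CoxeterSystem.lift_apply_simple] at h
  have h2 := congrArg (fun g : Module.End ℝ (B →₀ ℝ) => (g (ee i)) i) h
  simp only [sig_apply, cf_single, kk_diag] at h2
  rw [Finsupp.sub_apply, Finsupp.sub_apply, Finsupp.smul_apply, Finsupp.smul_apply] at h2
  simp only [ee, Finsupp.single_eq_same, Finsupp.single_eq_of_ne hne] at h2
  norm_num at h2

end CTwist

section Main

open CoxeterSystem

variable {B W : Type*} [Group W] {M : CoxeterMatrix B} (cs : CoxeterSystem M W)

lemma twist_liftable (J K Jperp L : Set B)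
    (hJperp : Jperp = {k : B | ∀ j ∈ J, M k j = 2})
    (hL : L = {l : B | l ∉ J ∪ Jperp ∪ K})
    (hinf : ∀ k ∈ K, ∀ l ∈ L, orderOf (cs.simple k * cs.simple l) = 0)
    (σ : W) (hσmem : σ ∈ Subgroup.closure (cs.simple '' J))
    (hσc : ∀ x ∈ Subgroup.closure (cs.simple '' J), σ * x = x * σ)
    (g : B → W) (hgL : ∀ i ∈ L, g i = σ * cs.simple i * σ⁻¹)
    (hgN : ∀ i ∉ L, g i = cs.simple i) :
    M.IsLiftable g := by
  have hLmem : ∀ i, i ∉ L → i ∈ J ∪ Jperp ∪ K := by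
    intro i hi
    by_contra h
    exact hi (by rw [hL]; exact h)
  have hMzero : ∀ k ∈ K, ∀ l ∈ L, M k l = 0 := by
    intro k hk l hl
    have h2 := orderOf_dvd_of_pow_eq_one (cs.simple_mul_simple_pow k l)
    rw [hinf k hk l hl] at h2
    exact zero_dvd_iff.mp h2
  have hcomm : ∀ j ∈ J ∪ Jperp, Commute σ (cs.simple j) := by
    intro j hj
    rcases hj with hj | hj
    · exact hσc _ (Subgroup.subset_closure ⟨j, hj, rfl⟩)
    · have hgen : ∀ x ∈ cs.simple '' J, Commute (cs.simple j) x := by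
        rintro _ ⟨j', hj', rfl⟩
        have hMjj' : M j j' = 2 := by rw [hJperp] at hj; exact hj j' hj'
        have hpow := cs.simple_mul_simple_pow j j'
        rw [hMjj', pow_two] at hpow
        have hinv : (cs.simple j * cs.simple j')⁻¹ = cs.simple j * cs.simple j' :=
          inv_eq_of_mul_eq_one_right hpow
        have h4 : cs.simple j' * cs.simple j = (cs.simple j * cs.simple j')⁻¹ := by
          rw [mul_inv_rev, cs.inv_simple, cs.inv_simple]
        rw [hinv] at h4
        exact h4.symm
      have : Commute (cs.simple j) σ := by
        refine Subgroup.closure_induction ?_ ?_ ?_ ?_ hσmem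
        · exact fun x hx => hgen x hx
        · exact Commute.one_right _
        · exact fun u w _ _ h1 h2 => h1.mul_right h2
        · exact fun u _ h1 => h1.inv_right
      exact this.symm
  intro i j
  by_cases hi : i ∈ L <;> by_cases hj : j ∈ L
  · have : g i * g j = σ * (cs.simple i * cs.simple j) * σ⁻¹ := by
      rw [hgL i hi, hgL j hj]; group
    rw [this, conj_pow, cs.simple_mul_simple_pow, mul_one, mul_inv_cancel]
  · rcases hLmem j hj with hjm | hjm
    · have hc : Commute σ (cs.simple j) := hcomm j hjm
      have : g i * g j = σ * (cs.simple i * cs.simple j) * σ⁻¹ := by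
        rw [hgL i hi, hgN j hj]
        have h3 : σ⁻¹ * cs.simple j = cs.simple j * σ⁻¹ := hc.inv_left.eq
        calc σ * cs.simple i * σ⁻¹ * cs.simple j
            = σ * cs.simple i * (σ⁻¹ * cs.simple j) := by group
          _ = σ * cs.simple i * (cs.simple j * σ⁻¹) := by rw [h3]
          _ = σ * (cs.simple i * cs.simple j) * σ⁻¹ := by group
      rw [this, conj_pow, cs.simple_mul_simple_pow, mul_one, mul_inv_cancel]
    · have : M i j = 0 := by rw [M.symmetric]; exact hMzero j hjm i hi
      rw [this, pow_zero]
  · rcases hLmem i hi with him | him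
    · have hc : Commute σ (cs.simple i) := hcomm i him
      have : g i * g j = σ * (cs.simple i * cs.simple j) * σ⁻¹ := by
        rw [hgN i hi, hgL j hj]
        calc cs.simple i * (σ * cs.simple j * σ⁻¹)
            = (cs.simple i * σ) * cs.simple j * σ⁻¹ := by group
          _ = (σ * cs.simple i) * cs.simple j * σ⁻¹ := by rw [hc.eq]
          _ = σ * (cs.simple i * cs.simple j) * σ⁻¹ := by group
      rw [this, conj_pow, cs.simple_mul_simple_pow, mul_one, mul_inv_cancel]
    · have : M i j = 0 := hMzero i him j hj
      rw [this, pow_zero]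
  · rw [hgN i hi, hgN j hj]
    exact cs.simple_mul_simple_pow i j

end Main

/-- Let `(W, S)` be a Coxeter system and `(J, K)` an `S`-admissible pair such
that the longest element `ρ_J` of `⟨J⟩` is central in `⟨J⟩`.  Then the Coxeter matrices
`M(S)` and `M(S')` of `S` and of the twist `S' = T_{(J,K)}(S)` are isomorphic, via the
bijection fixing `J ∪ J^⊥ ∪ K` and sending `l ↦ ρ_J l ρ_J` for `l ∈ L`. -/
theorem coxeter_twist_by_central_longest_preserves_type
    {B W : Type*} [Group W] {M : CoxeterMatrix B} (cs : CoxeterSystem M W)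
    (J K : Set B) (ρ : W)
    (Jperp : Set B) (hJperp : Jperp = {k : B | ∀ j ∈ J, M k j = 2})
    (L : Set B) (hL : L = {l : B | l ∉ J ∪ Jperp ∪ K})
    (hfin : ((Subgroup.closure (cs.simple '' J) : Subgroup W) : Set W).Finite)
    (hK : K ∩ (J ∪ Jperp) = ∅)
    (hinf : ∀ k ∈ K, ∀ l ∈ L, orderOf (cs.simple k * cs.simple l) = 0)
    (hmem : ρ ∈ Subgroup.closure (cs.simple '' J))
    (hlong : ∀ x ∈ Subgroup.closure (cs.simple '' J), cs.length x ≤ cs.length ρ)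
    -- `ρ` is central in `⟨J⟩`:
    (hcentral : ∀ x ∈ Subgroup.closure (cs.simple '' J), ρ * x = x * ρ)
    -- the bijection `S → S'`:
    (f : B → W) (hf : (∀ i ∈ L, f i = ρ * cs.simple i * ρ⁻¹) ∧ ∀ i ∉ L, f i = cs.simple i) :
    Function.Injective f ∧
    ∀ i j : B, orderOf (f i * f j) = orderOf (cs.simple i * cs.simple j) := by
  classical
  obtain ⟨hfL, hfN⟩ := hf
  set G : B → W := fun i => if i ∈ L then ρ⁻¹ * cs.simple i * (ρ⁻¹)⁻¹ else cs.simple i with hG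
  have hGL : ∀ i ∈ L, G i = ρ⁻¹ * cs.simple i * (ρ⁻¹)⁻¹ := by
    intro i hi; simp only [hG, if_pos hi]
  have hGN : ∀ i ∉ L, G i = cs.simple i := by
    intro i hi; simp only [hG, if_neg hi]
  have hcentral' : ∀ x ∈ Subgroup.closure (cs.simple '' J), ρ⁻¹ * x = x * ρ⁻¹ := by
    intro x hx
    have : Commute ρ x := hcentral x hx
    exact this.inv_left.eq
  have liftf : M.IsLiftable f :=
    twist_liftable cs J K Jperp L hJperp hL hinf ρ hmem hcentral f hfL hfN
  have liftG : M.IsLiftable G :=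
    twist_liftable cs J K Jperp L hJperp hL hinf ρ⁻¹ (inv_mem hmem) hcentral' G hGL hGN
  set α := cs.lift ⟨f, liftf⟩ with hα
  set β := cs.lift ⟨G, liftG⟩ with hβ
  have hβρ : ∀ x ∈ Subgroup.closure (cs.simple '' J), β x = x := by
    intro x hx
    refine Subgroup.closure_induction ?_ ?_ ?_ ?_ hx
    · rintro _ ⟨j, hj, rfl⟩
      have hjN : j ∉ L := by
        rw [hL]
        simp only [Set.mem_setOf_eq, not_not]
        exact Or.inl (Or.inl hj)
      rw [hβ, CoxeterSystem.lift_apply_simple]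
      exact hGN j hjN
    · exact map_one β
    · intro u w _ _ h1 h2; rw [map_mul, h1, h2]
    · intro u _ h1; rw [map_inv, h1]
  have hβf : ∀ i, β (f i) = cs.simple i := by
    intro i
    by_cases hi : i ∈ L
    · rw [hfL i hi, map_mul, map_mul, map_inv, hβρ ρ hmem, hβ,
        CoxeterSystem.lift_apply_simple, hGL i hi]
      group
    · rw [hfN i hi, hβ, CoxeterSystem.lift_apply_simple, hGN i hi]
  constructor
  · intro i j hij
    have h : cs.simple i = cs.simple j := by rw [← hβf i, ← hβf j, hij]
    exact CTwist.simple_injective M cs h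
  · intro i j
    have h1 : α (cs.simple i * cs.simple j) = f i * f j := by
      rw [map_mul, hα, CoxeterSystem.lift_apply_simple, CoxeterSystem.lift_apply_simple]
    have h2 : β (f i * f j) = cs.simple i * cs.simple j := by
      rw [map_mul, hβf, hβf]
    apply Nat.dvd_antisymm
    · rw [← h1]
      exact orderOf_map_dvd α _
    · rw [← h2]
      exact orderOf_map_dvd β _
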